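/- arXiv:2003.11843 — 2 statements merged into one kernel-verified Lean document; each statement's English description precedes it below -/
import Mathlib

section
/- Let κ ≥ 0 and let Δ_κ be the rank-one Dunkl Laplacian Δ_κ f(x) = f''(x) + (κ/x²)[f(−x) − f(x) + 2x f'(x)], with carré du champ Γ(f)(x) = f'(x)² + (κ/(2x²))(f(x) − f(−x))² and Γ₂(f) = ½[Δ_κ Γ(f) − 2Γ(Δ_κ f, f)]. Then for every f ∈ C⁴(ℝ) and x ≠ 0: Γ₂(f)(x) = f''(x)² + (κ/x²)[f'(x) + f'(−x) − (f(x) − f(−x))/x]² + (κ/(2x²))[2f'(x) − (f(x) − f(−x))/x]². -/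
/-- The rank-one Dunkl Laplacian. -/
noncomputable def dunklLap1 (κ : ℝ) (f : ℝ → ℝ) (x : ℝ) : ℝ :=
  deriv (deriv f) x + κ / x ^ 2 * (f (-x) - f x + 2 * x * deriv f x)

/-- The rank-one carré du champ operator (roots normalized so that |α| = √2). -/
noncomputable def dunklGamma1 (κ : ℝ) (f g : ℝ → ℝ) (x : ℝ) : ℝ :=
  deriv f x * deriv g x + κ / (2 * x ^ 2) * (f x - f (-x)) * (g x - g (-x))

/-- The rank-one iterated carré du champ operator
`Γ₂(f) = ½ Δ_κ Γ(f) − Γ(Δ_κ f, f)`. -/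
noncomputable def dunklGamma2 (κ : ℝ) (f : ℝ → ℝ) (x : ℝ) : ℝ :=
  (1 / 2) * dunklLap1 κ (fun y => dunklGamma1 κ f f y) x
    - dunklGamma1 κ (fun y => dunklLap1 κ f y) f x

/-- closed form for the derivative of `Γ(f)` away from the origin -/
noncomputable def dunklGammaDeriv (κ : ℝ) (f : ℝ → ℝ) (y : ℝ) : ℝ :=
  2 * deriv f y * deriv (deriv f) y
    - κ * (f y - f (-y)) ^ 2 / y ^ 3
    + κ * (f y - f (-y)) * (deriv f y + deriv f (-y)) / y ^ 2

lemma dunkl_aux_neg (f : ℝ → ℝ) (hf : Differentiable ℝ f) (y : ℝ) :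
    HasDerivAt (fun z => f (-z)) (-deriv f (-y)) y := by
  have := ((hf (-y)).hasDerivAt).comp y (hasDerivAt_neg y)
  simpa [Function.comp, mul_comm, Function.comp_def, Pi.sub_def, Pi.add_def, Pi.mul_def, Pi.div_def] using this

lemma hasDerivAt_dunklGamma (κ : ℝ) (f : ℝ → ℝ) (hd0 : Differentiable ℝ f)
    (hd1 : Differentiable ℝ (deriv f)) {y : ℝ} (hy : y ≠ 0) :
    HasDerivAt (fun z => dunklGamma1 κ f f z) (dunklGammaDeriv κ f y) y := by
  have h1 : HasDerivAt f (deriv f y) y := (hd0 y).hasDerivAt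
  have h1n : HasDerivAt (fun z => f (-z)) (-deriv f (-y)) y := dunkl_aux_neg f hd0 y
  have hu : HasDerivAt (fun z => f z - f (-z)) (deriv f y + deriv f (-y)) y := by
    simpa [sub_neg_eq_add, Function.comp_def, Pi.sub_def, Pi.add_def, Pi.mul_def, Pi.div_def] using h1.sub h1n
  have h2 : HasDerivAt (deriv f) (deriv (deriv f) y) y := (hd1 y).hasDerivAt
  have hden : HasDerivAt (fun z : ℝ => 2 * z ^ 2) (2 * (2 * y ^ 1)) y := by
    simpa using (hasDerivAt_pow 2 y).const_mul 2
  have hq : HasDerivAt (fun z : ℝ => κ / (2 * z ^ 2))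
      ((0 * (2 * y ^ 2) - κ * (2 * (2 * y ^ 1))) / (2 * y ^ 2) ^ 2) y :=
    (hasDerivAt_const y κ).div hden (by positivity)
  have H : HasDerivAt (fun z => deriv f z * deriv f z
          + κ / (2 * z ^ 2) * (f z - f (-z)) * (f z - f (-z))) _ y :=
    (h2.mul h2).add ((hq.mul hu).mul hu)
  have hfun : (fun z => dunklGamma1 κ f f z)
      = fun z => deriv f z * deriv f z
          + κ / (2 * z ^ 2) * (f z - f (-z)) * (f z - f (-z)) := rfl
  rw [hfun]
  convert H using 1
  simp only [dunklGammaDeriv, Pi.mul_apply]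
  field_simp
  ring

theorem dunklGamma2_formula (κ : ℝ) (hκ : 0 ≤ κ) (f : ℝ → ℝ)
    (hf : ContDiff ℝ 4 f) (x : ℝ) (hx : x ≠ 0) :
    dunklGamma2 κ f x
      = (deriv (deriv f) x) ^ 2
        + κ / x ^ 2 * (deriv f x + deriv f (-x) - (f x - f (-x)) / x) ^ 2
        + κ / (2 * x ^ 2) * (2 * deriv f x - (f x - f (-x)) / x) ^ 2 := by
  -- regularity of successive derivatives
  have hc3 : ContDiff ℝ 3 (deriv f) := by
    have h : ContDiff ℝ ((3 : ℕ∞) + 1) f := by exact_mod_cast hf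
    exact (contDiff_succ_iff_deriv.mp h).2.2
  have hc2 : ContDiff ℝ 2 (deriv (deriv f)) := by
    have h : ContDiff ℝ ((2 : ℕ∞) + 1) (deriv f) := by exact_mod_cast hc3
    exact (contDiff_succ_iff_deriv.mp h).2.2
  have hd0 : Differentiable ℝ f := hf.differentiable (by norm_num)
  have hd1 : Differentiable ℝ (deriv f) := hc3.differentiable (by norm_num)
  have hd2 : Differentiable ℝ (deriv (deriv f)) := hc2.differentiable (by norm_num)
  -- basic HasDerivAt facts at x
  have h1 : HasDerivAt f (deriv f x) x := (hd0 x).hasDerivAt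
  have h1n : HasDerivAt (fun z => f (-z)) (-deriv f (-x)) x := dunkl_aux_neg f hd0 x
  have h2 : HasDerivAt (deriv f) (deriv (deriv f) x) x := (hd1 x).hasDerivAt
  have h2n : HasDerivAt (fun z => deriv f (-z)) (-deriv (deriv f) (-x)) x :=
    dunkl_aux_neg (deriv f) hd1 x
  have h3 : HasDerivAt (deriv (deriv f)) (deriv (deriv (deriv f)) x) x := (hd2 x).hasDerivAt
  have hu : HasDerivAt (fun z => f z - f (-z)) (deriv f x + deriv f (-x)) x := by
    simpa [sub_neg_eq_add, Function.comp_def, Pi.sub_def, Pi.add_def, Pi.mul_def, Pi.div_def] using h1.sub h1n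
  have hup : HasDerivAt (fun z => deriv f z + deriv f (-z))
      (deriv (deriv f) x + -deriv (deriv f) (-x)) x := h2.add h2n
  -- derivative of Γ(f) near x
  have hGd : ∀ y : ℝ, y ≠ 0 →
      deriv (fun z => dunklGamma1 κ f f z) y = dunklGammaDeriv κ f y :=
    fun y hy => (hasDerivAt_dunklGamma κ f hd0 hd1 hy).deriv
  have hev : deriv (fun z => dunklGamma1 κ f f z) =ᶠ[nhds x] dunklGammaDeriv κ f := by
    filter_upwards [eventually_ne_nhds hx] with y hy using hGd y hy
  -- second derivative of Γ(f) at x : differentiate dunklGammaDeriv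
  have hA : HasDerivAt (fun z => 2 * deriv f z * deriv (deriv f) z)
      ((2 * deriv (deriv f) x) * deriv (deriv f) x
        + (2 * deriv f x) * deriv (deriv (deriv f)) x) x :=
    (h2.const_mul 2).mul h3
  have hB : HasDerivAt (fun z => κ * (f z - f (-z)) ^ 2 / z ^ 3)
      (((κ * (2 * (f x - f (-x)) ^ 1 * (deriv f x + deriv f (-x)))) * x ^ 3
          - κ * (f x - f (-x)) ^ 2 * (3 * x ^ 2)) / (x ^ 3) ^ 2) x := by
    have := ((hu.pow 2).const_mul κ).div (hasDerivAt_pow 3 x) (pow_ne_zero 3 hx)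
    simpa [Function.comp_def, Pi.sub_def, Pi.add_def, Pi.mul_def, Pi.div_def] using this
  have hC : HasDerivAt (fun z => κ * (f z - f (-z)) * (deriv f z + deriv f (-z)) / z ^ 2)
      ((((κ * (deriv f x + deriv f (-x))) * (deriv f x + deriv f (-x))
          + (κ * (f x - f (-x))) * (deriv (deriv f) x + -deriv (deriv f) (-x))) * x ^ 2
          - κ * (f x - f (-x)) * (deriv f x + deriv f (-x)) * (2 * x ^ 1)) / (x ^ 2) ^ 2) x := by
    have := ((hu.const_mul κ).mul hup).div (hasDerivAt_pow 2 x) (pow_ne_zero 2 hx)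
    simpa [Function.comp_def, Pi.sub_def, Pi.add_def, Pi.mul_def, Pi.div_def] using this
  have hGdd : HasDerivAt (dunklGammaDeriv κ f) _ x := (hA.sub hB).add hC
  have h2G : deriv (deriv (fun z => dunklGamma1 κ f f z)) x
      = deriv (dunklGammaDeriv κ f) x := hev.deriv_eq
  -- derivative of Δ f at x
  have hv : HasDerivAt (fun z => f (-z) - f z + 2 * z * deriv f z)
      ((-deriv f (-x) - deriv f x) + (2 * deriv f x + (2 * x) * deriv (deriv f) x)) x := by
    have := (h1n.sub h1).add (((hasDerivAt_id x).const_mul 2).mul h2)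
    simpa [Function.comp_def, Pi.sub_def, Pi.add_def, Pi.mul_def, Pi.div_def] using this
  have hq2 : HasDerivAt (fun z : ℝ => κ / z ^ 2)
      ((0 * x ^ 2 - κ * (2 * x ^ 1)) / (x ^ 2) ^ 2) x :=
    (hasDerivAt_const x κ).div (hasDerivAt_pow 2 x) (pow_ne_zero 2 hx)
  have hL : HasDerivAt (fun z => dunklLap1 κ f z)
      (deriv (deriv (deriv f)) x
        + ((0 * x ^ 2 - κ * (2 * x ^ 1)) / (x ^ 2) ^ 2 * (f (-x) - f x + 2 * x * deriv f x)
          + κ / x ^ 2 * (-deriv f (-x) - deriv f x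
              + (2 * deriv f x + 2 * x * deriv (deriv f) x)))) x := h3.add (hq2.mul hv)
  -- assemble
  have e1 : deriv (fun z => dunklGamma1 κ f f z) x = dunklGammaDeriv κ f x := hGd x hx
  have e2 := hGdd.deriv
  have e3 := hL.deriv
  have hxn : -x ≠ 0 := neg_ne_zero.mpr hx
  have E1 : dunklLap1 κ (fun y => dunklGamma1 κ f f y) x
      = deriv (dunklGammaDeriv κ f) x
        + κ / x ^ 2 * (dunklGamma1 κ f f (-x) - dunklGamma1 κ f f x
            + 2 * x * dunklGammaDeriv κ f x) := by
    simp only [dunklLap1]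
    rw [h2G, e1]
  have E2 : dunklGamma1 κ (fun y => dunklLap1 κ f y) f x
      = deriv (fun z => dunklLap1 κ f z) x * deriv f x
        + κ / (2 * x ^ 2) * (dunklLap1 κ f x - dunklLap1 κ f (-x)) * (f x - f (-x)) := by
    simp only [dunklGamma1]
  have estart : dunklGamma2 κ f x
      = (1 / 2) * dunklLap1 κ (fun y => dunklGamma1 κ f f y) x
        - dunklGamma1 κ (fun y => dunklLap1 κ f y) f x := rfl
  rw [estart, E1, E2, e2, e3]
  simp only [dunklGamma1, dunklLap1, dunklGammaDeriv, neg_neg]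
  field_simp
  ring
end

section
/- Let κ ≥ 0 and let Γ₂ be the rank-one Dunkl iterated carré du champ as above. Then for every f ∈ C⁴(ℝ) and every x ≠ 0, Γ₂(f)(x) ≥ f''(x)². -/
private lemma hasDerivAt_negComp {g : ℝ → ℝ} (hg : Differentiable ℝ g) (y : ℝ) :
    HasDerivAt (fun z : ℝ => g (-z)) (-(deriv g (-y))) y := by
  have := ((hg (-y)).hasDerivAt).comp y (hasDerivAt_neg y)
  refine this.congr_deriv ?_
  ring

private lemma hasDerivAt_c_div_sq (c : ℝ) {y : ℝ} (hy : y ≠ 0) :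
    HasDerivAt (fun z : ℝ => c / z ^ 2) (-2 * c / y ^ 3) y := by
  have h := (hasDerivAt_const y c).div (hasDerivAt_pow 2 y) (pow_ne_zero 2 hy)
  refine h.congr_deriv ?_
  field_simp
  ring

private lemma hasDerivAt_c_div_cube (c : ℝ) {y : ℝ} (hy : y ≠ 0) :
    HasDerivAt (fun z : ℝ => c / z ^ 3) (-3 * c / y ^ 4) y := by
  have h := (hasDerivAt_const y c).div (hasDerivAt_pow 3 y) (pow_ne_zero 3 hy)
  refine h.congr_deriv ?_
  field_simp
  ring

private lemma hasDerivAt_c_div_two_sq (c : ℝ) {y : ℝ} (hy : y ≠ 0) :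
    HasDerivAt (fun z : ℝ => c / (2 * z ^ 2)) (-c / y ^ 3) y := by
  have h2 : (2 : ℝ) * y ^ 2 ≠ 0 := by positivity
  have h := (hasDerivAt_const y c).div ((hasDerivAt_pow 2 y).const_mul 2) h2
  refine h.congr_deriv ?_
  field_simp
  ring

private noncomputable def dunklGammaD (κ : ℝ) (f : ℝ → ℝ) (y : ℝ) : ℝ :=
  2 * deriv f y * deriv (deriv f) y
    - κ / y ^ 3 * (f y - f (-y)) ^ 2
    + κ / y ^ 2 * (f y - f (-y)) * (deriv f y + deriv f (-y))

private noncomputable def dunklLapD (κ : ℝ) (f : ℝ → ℝ) (y : ℝ) : ℝ :=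
  deriv (deriv (deriv f)) y
    - 2 * κ / y ^ 3 * (f (-y) - f y + 2 * y * deriv f y)
    + κ / y ^ 2 * (deriv f y - deriv f (-y) + 2 * y * deriv (deriv f) y)

set_option maxHeartbeats 2000000 in
theorem dunklGamma2_CD (κ : ℝ) (hκ : 0 ≤ κ) (f : ℝ → ℝ)
    (hf : ContDiff ℝ 4 f) (x : ℝ) (hx : x ≠ 0) :
    (deriv (deriv f) x) ^ 2 ≤ dunklGamma2 κ f x := by
  have hc1 : ContDiff ℝ 3 (deriv f) :=
    (contDiff_succ_iff_deriv.mp (show ContDiff ℝ (3+1) f by norm_num [hf])).2.2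
  have hc2 : ContDiff ℝ 2 (deriv (deriv f)) :=
    (contDiff_succ_iff_deriv.mp (show ContDiff ℝ (2+1) (deriv f) by norm_num [hc1])).2.2
  have hd0 : Differentiable ℝ f := hf.differentiable (by norm_num)
  have hd1 : Differentiable ℝ (deriv f) := hc1.differentiable (by norm_num)
  have hd2 : Differentiable ℝ (deriv (deriv f)) := hc2.differentiable (by norm_num)
  -- difference function U z = f z - f (-z)
  have hU : ∀ y : ℝ, HasDerivAt (fun z : ℝ => f z - f (-z))
      (deriv f y + deriv f (-y)) y := fun y => by
    have := ((hd0 y).hasDerivAt).sub (hasDerivAt_negComp hd0 y)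
    refine this.congr_deriv ?_
    ring
  -- sum function S z = deriv f z + deriv f (-z)
  have hS : ∀ y : ℝ, HasDerivAt (fun z : ℝ => deriv f z + deriv f (-z))
      (deriv (deriv f) y - deriv (deriv f) (-y)) y := fun y => by
    have := ((hd1 y).hasDerivAt).add (hasDerivAt_negComp hd1 y)
    refine this.congr_deriv ?_
    ring
  -- the carré du champ G and its derivative G'
  have hG : ∀ y : ℝ, y ≠ 0 → HasDerivAt (fun z => dunklGamma1 κ f f z) (dunklGammaD κ f y) y := by
    intro y hy
    have h : HasDerivAt (fun z : ℝ => deriv f z * deriv f z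
          + κ / (2 * z ^ 2) * (f z - f (-z)) * (f z - f (-z)))
        ((deriv (deriv f) y * deriv f y + deriv f y * deriv (deriv f) y)
          + (((-κ / y ^ 3) * (f y - f (-y))
              + κ / (2 * y ^ 2) * (deriv f y + deriv f (-y))) * (f y - f (-y))
            + κ / (2 * y ^ 2) * (f y - f (-y)) * (deriv f y + deriv f (-y)))) y :=
      (((hd1 y).hasDerivAt).mul ((hd1 y).hasDerivAt)).add
        ((((hasDerivAt_c_div_two_sq κ hy).mul (hU y)).mul (hU y)))
    have heq : (fun z => dunklGamma1 κ f f z)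
        = fun z : ℝ => deriv f z * deriv f z
            + κ / (2 * z ^ 2) * (f z - f (-z)) * (f z - f (-z)) := by
      funext z; simp [dunklGamma1]
    rw [heq]
    convert h using 1
    simp only [dunklGammaD]
    field_simp [hy]
    ring
  -- derivative of the Dunkl Laplacian L of f
  have hL : ∀ y : ℝ, y ≠ 0 → HasDerivAt (fun z => dunklLap1 κ f z) (dunklLapD κ f y) y := by
    intro y hy
    have hV : HasDerivAt (fun z : ℝ => f (-z) - f z + 2 * z * deriv f z)
        ((-(deriv f (-y)) - deriv f y)
          + ((2 * 1) * deriv f y + 2 * y * deriv (deriv f) y)) y :=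
      ((hasDerivAt_negComp hd0 y).sub ((hd0 y).hasDerivAt)).add
        (((hasDerivAt_id y).const_mul 2).mul ((hd1 y).hasDerivAt))
    have h : HasDerivAt (fun z : ℝ => deriv (deriv f) z
          + κ / z ^ 2 * (f (-z) - f z + 2 * z * deriv f z))
        (deriv (deriv (deriv f)) y
          + ((-2 * κ / y ^ 3) * (f (-y) - f y + 2 * y * deriv f y)
            + κ / y ^ 2 * ((-(deriv f (-y)) - deriv f y)
              + ((2 * 1) * deriv f y + 2 * y * deriv (deriv f) y)))) y :=
      ((hd2 y).hasDerivAt).add ((hasDerivAt_c_div_sq κ hy).mul hV)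
    have heq : (fun z => dunklLap1 κ f z)
        = fun z : ℝ => deriv (deriv f) z
            + κ / z ^ 2 * (f (-z) - f z + 2 * z * deriv f z) := by
      funext z; simp [dunklLap1]
    rw [heq]
    convert h using 1
    simp only [dunklLapD]
    field_simp [hy]
    ring
  -- second derivative of G at x : deriv (deriv G) x = deriv G' x
  have hmem : {y : ℝ | y ≠ 0} ∈ nhds x := isOpen_ne.mem_nhds hx
  have hGG' : deriv (fun z => dunklGamma1 κ f f z) =ᶠ[nhds x] dunklGammaD κ f :=
    Filter.eventuallyEq_of_mem hmem (fun y hy => (hG y hy).deriv)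
  have hGpp : deriv (deriv (fun z => dunklGamma1 κ f f z)) x = deriv (dunklGammaD κ f) x :=
    hGG'.deriv_eq
  -- compute deriv G' x explicitly
  have hG'x : HasDerivAt (dunklGammaD κ f)
      (((2 * deriv (deriv f) x) * deriv (deriv f) x
          + (2 * deriv f x) * deriv (deriv (deriv f)) x)
        - ((-3 * κ / x ^ 4) * (f x - f (-x)) ^ 2
          + κ / x ^ 3 * ((2 : ℕ) * (f x - f (-x)) ^ 1 * (deriv f x + deriv f (-x))))
        + (((-2 * κ / x ^ 3) * (f x - f (-x))
            + κ / x ^ 2 * (deriv f x + deriv f (-x))) * (deriv f x + deriv f (-x))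
          + κ / x ^ 2 * (f x - f (-x))
            * (deriv (deriv f) x - deriv (deriv f) (-x)))) x := by
    have hA : HasDerivAt (fun y : ℝ => 2 * deriv f y * deriv (deriv f) y)
        ((2 * deriv (deriv f) x) * deriv (deriv f) x
          + (2 * deriv f x) * deriv (deriv (deriv f)) x) x := by
      have := (((hd1 x).hasDerivAt).const_mul 2).mul ((hd2 x).hasDerivAt)
      exact this
    have hB : HasDerivAt (fun y : ℝ => κ / y ^ 3 * (f y - f (-y)) ^ 2)
        ((-3 * κ / x ^ 4) * (f x - f (-x)) ^ 2
          + κ / x ^ 3 * ((2 : ℕ) * (f x - f (-x)) ^ 1 * (deriv f x + deriv f (-x)))) x :=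
      (hasDerivAt_c_div_cube κ hx).mul ((hU x).pow 2)
    have hC : HasDerivAt
        (fun y : ℝ => κ / y ^ 2 * (f y - f (-y)) * (deriv f y + deriv f (-y)))
        (((-2 * κ / x ^ 3) * (f x - f (-x))
            + κ / x ^ 2 * (deriv f x + deriv f (-x))) * (deriv f x + deriv f (-x))
          + κ / x ^ 2 * (f x - f (-x))
            * (deriv (deriv f) x - deriv (deriv f) (-x))) x :=
      (((hasDerivAt_c_div_sq κ hx).mul (hU x)).mul (hS x))
    have heq : dunklGammaD κ f = fun y : ℝ =>
        2 * deriv f y * deriv (deriv f) y - κ / y ^ 3 * (f y - f (-y)) ^ 2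
          + κ / y ^ 2 * (f y - f (-y)) * (deriv f y + deriv f (-y)) := by
      funext z; simp [dunklGammaD]
    rw [heq]
    exact (hA.sub hB).add hC
  have hnx : (-x : ℝ) ≠ 0 := neg_ne_zero.mpr hx
  -- assemble everything
  have key : dunklGamma2 κ f x - (deriv (deriv f) x) ^ 2
      = κ / x ^ 4 * ((3 / 2) * ((f x - f (-x))
            - (2 / 3) * x * (deriv f (-x) + 2 * deriv f x)) ^ 2
          + (x ^ 2 / 3) * (deriv f x - deriv f (-x)) ^ 2) := by
    have e1 : deriv (fun z => dunklGamma1 κ f f z) x = dunklGammaD κ f x := (hG x hx).deriv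
    have e2 : deriv (fun z => dunklLap1 κ f z) x = dunklLapD κ f x := (hL x hx).deriv
    have e3 := hG'x.deriv
    have h1 : dunklLap1 κ (fun y => dunklGamma1 κ f f y) x
        = deriv (dunklGammaD κ f) x + κ / x ^ 2
            * (dunklGamma1 κ f f (-x) - dunklGamma1 κ f f x + 2 * x * dunklGammaD κ f x) := by
      rw [dunklLap1, hGpp, e1]
    have h2 : dunklGamma1 κ (fun y => dunklLap1 κ f y) f x
        = dunklLapD κ f x * deriv f x + κ / (2 * x ^ 2)
            * (dunklLap1 κ f x - dunklLap1 κ f (-x)) * (f x - f (-x)) := by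
      rw [dunklGamma1, e2]
    rw [dunklGamma2, h1, h2, e3]
    simp only [dunklGammaD, dunklLapD]
    simp only [dunklGamma1, dunklLap1, neg_neg]
    field_simp [hx]
    ring
  have h4 : (0:ℝ) < x ^ 4 := by positivity
  have hinner : (0:ℝ) ≤ (3 / 2) * ((f x - f (-x))
        - (2 / 3) * x * (deriv f (-x) + 2 * deriv f x)) ^ 2
      + (x ^ 2 / 3) * (deriv f x - deriv f (-x)) ^ 2 := by positivity
  have hpos := mul_nonneg (div_nonneg hκ h4.le) hinner
  linarith [key, hpos]
end
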